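/- Let n ≥ 2 be an integer and let α ∈ (0, π/2) be a real number with cos(nα) ≠ 0 satisfying n·tan α = tan(nα). Then the complex number β = e^{iα} is algebraic over ℚ and is not a root of unity. -/

import Mathlib

open IntermediateField Polynomial

set_option maxHeartbeats 2000000 in
lemma aux (n : ℕ) (hn : 2 ≤ n) (w : ℂ) (m : ℕ) (hm : 0 < m) (hwm : w ^ m = 1)
    (hw1 : w ≠ 1) (hwn1 : w ≠ -1)
    (hrel : (n : ℂ) * (w - 1) * (w ^ n + 1) = (w ^ n - 1) * (w + 1)) : False := by
  -- small cases
  rcases Nat.lt_or_ge n 4 with h4 | h4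
  · interval_cases n
    · -- n = 2
      have h : (w - 1) ^ 3 = 0 := by linear_combination hrel
      exact hw1 (by linear_combination (pow_eq_zero_iff (by norm_num)).mp h)
    · -- n = 3
      have h : (w - 1) ^ 3 * (w + 1) = 0 := by linear_combination hrel / 2
      rcases mul_eq_zero.mp h with h | h
      · exact hw1 (by linear_combination (pow_eq_zero_iff (by norm_num)).mp h)
      · exact hwn1 (by linear_combination h)
  · -- n ≥ 4
    have rel2 : ((n : ℂ) + 1) * ((w ^ n + 1) * (w - 1)) = 2 * (w ^ (n + 1) - 1) := by
      have : w ^ (n+1) = w ^ n * w := by ring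
      rw [this]; linear_combination hrel
    have hwn : w ^ n ≠ -1 := by
      intro h
      have h1 : w ^ (n+1) = 1 := by
        have := rel2
        rw [h] at this
        have : (2:ℂ) * (w ^ (n+1) - 1) = 0 := by linear_combination -this
        have := (mul_eq_zero.mp this).resolve_left (by norm_num)
        linear_combination this
      exact hwn1 (by
        have : w ^ (n+1) = w ^ n * w := by ring
        rw [this, h] at h1
        linear_combination -h1)
    have hv0 : w ^ (n + 1) - 1 ≠ 0 := by
      intro h
      have := rel2
      rw [h, mul_zero] at this
      have hns : ((n:ℂ)+1) ≠ 0 := by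
        have : ((n+1 : ℕ) : ℂ) ≠ 0 := Nat.cast_ne_zero.mpr (Nat.succ_ne_zero n)
        push_cast at this; exact this
      rcases mul_eq_zero.mp this with h' | h'
      · exact hns h'
      rcases mul_eq_zero.mp h' with h'' | h''
      · exact hwn (by linear_combination h'')
      · exact hw1 (by linear_combination h'')
    have hu0 : (w ^ n + 1) * (w - 1) ≠ 0 := by
      intro h
      rw [h, mul_zero] at rel2
      exact hv0 (by
        have := (mul_eq_zero.mp rel2.symm).resolve_left (by norm_num)
        exact this)
    -- number field setup
    have hwint : IsIntegral ℚ w :=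
      ⟨X ^ m - 1, monic_X_pow_sub_C 1 hm.ne', by simp [hwm]⟩
    haveI : FiniteDimensional ℚ ℚ⟮w⟯ := IntermediateField.adjoin.finiteDimensional hwint
    set K := ℚ⟮w⟯ with hK
    set ω : K := IntermediateField.AdjoinSimple.gen ℚ w with hω
    have hmap : algebraMap K ℂ ω = w := IntermediateField.AdjoinSimple.algebraMap_gen ℚ w
    have hinj : Function.Injective (algebraMap K ℂ) := (algebraMap K ℂ).injective
    have hωm : ω ^ m = 1 := hinj (by rw [map_pow, hmap, hwm, map_one])
    set u : K := (ω ^ n + 1) * (ω - 1) with hu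
    set v : K := ω ^ (n + 1) - 1 with hv
    have hmapu : algebraMap K ℂ u = (w ^ n + 1) * (w - 1) := by
      simp [hu, map_mul, map_add, map_sub, map_pow, hmap]
    have hmapv : algebraMap K ℂ v = w ^ (n + 1) - 1 := by
      simp [hv, map_sub, map_pow, hmap]
    have hrelK : ((n : K) + 1) * u = 2 * v := hinj (by
      rw [map_mul (algebraMap K ℂ) ((n : K) + 1) u, map_mul (algebraMap K ℂ) 2 v,
        hmapu, hmapv, map_add, map_natCast, map_one, map_ofNat]
      exact rel2)
    have huK0 : u ≠ 0 := fun h => hu0 (by rw [← hmapu, h, map_zero])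
    have hvK0 : v ≠ 0 := fun h => hv0 (by rw [← hmapv, h, map_zero])
    have hωint : IsIntegral ℤ ω :=
      ⟨X ^ m - 1, monic_X_pow_sub_C 1 hm.ne', by simp [hωm]⟩
    have huint : IsIntegral ℤ u :=
      ((hωint.pow n).add isIntegral_one).mul (hωint.sub isIntegral_one)
    clear_value u v ω
    set D := Module.finrank ℚ K with hD
    have hDpos : 0 < D := Module.finrank_pos
    -- norm equation
    have hNeq : ((n : ℚ) + 1) ^ D * Algebra.norm ℚ u = 2 ^ D * Algebra.norm ℚ v := by
      have h1 : ((n : K) + 1) = algebraMap ℚ K ((n : ℚ) + 1) := by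
        rw [map_add, map_natCast, map_one]
      have h2 : (2 : K) = algebraMap ℚ K 2 := by rw [map_ofNat]
      have hc := congrArg (Algebra.norm ℚ) hrelK
      rw [map_mul, map_mul, h1, h2] at hc
      rw [Algebra.norm_algebraMap, Algebra.norm_algebraMap] at hc
      exact hc
    -- |N u| ≥ 1
    have hNuint : IsIntegral ℤ (Algebra.norm ℚ u) := Algebra.isIntegral_norm ℚ huint
    obtain ⟨a, ha⟩ := IsIntegrallyClosed.isIntegral_iff.mp hNuint
    have hNu0 : Algebra.norm ℚ u ≠ 0 := Algebra.norm_ne_zero_iff.mpr huK0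
    have hNu1 : 1 ≤ |Algebra.norm ℚ u| := by
      have ha0 : a ≠ 0 := fun h => hNu0 (by rw [← ha, h]; simp)
      rw [← ha]
      have h1 : (1:ℤ) ≤ |a| := Int.one_le_abs ha0
      have h2 : (algebraMap ℤ ℚ) a = (a : ℚ) := by simp [algebraMap_int_eq, eq_intCast]
      rw [h2]
      exact_mod_cast h1
    -- |N v| ≤ 2 ^ D
    have hcard : Fintype.card (K →ₐ[ℚ] ℂ) = D := AlgHom.card ℚ K ℂ
    have hNv : |Algebra.norm ℚ v| ≤ 2 ^ D := by
      have hpe := Algebra.norm_eq_prod_embeddings ℚ ℂ (x := v)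
      have h1 : ‖(algebraMap ℚ ℂ) (Algebra.norm ℚ v)‖ = ((|Algebra.norm ℚ v| : ℚ) : ℝ) := by
        rw [show (algebraMap ℚ ℂ) (Algebra.norm ℚ v) = ((Algebra.norm ℚ v : ℚ) : ℂ) from by
          simp [eq_ratCast]]
        rw [Complex.norm_ratCast]
        push_cast
        rfl
      have h2 : ‖(algebraMap ℚ ℂ) (Algebra.norm ℚ v)‖ ≤ ((2:ℝ)) ^ D := by
        rw [hpe, norm_prod]
        calc (∏ σ : K →ₐ[ℚ] ℂ, ‖σ v‖) ≤ ∏ _σ : K →ₐ[ℚ] ℂ, (2:ℝ) := by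
              apply Finset.prod_le_prod (fun _ _ => norm_nonneg _) (fun σ _ => ?_)
              have hσω : ‖σ ω‖ = 1 := by
                have ha : (σ ω) ^ m = 1 := by rw [← map_pow, hωm, map_one]
                have hb : ‖σ ω‖ ^ m = 1 := by rw [← norm_pow, ha, norm_one]
                rcases (pow_eq_one_iff_of_ne_zero hm.ne').mp hb with h | ⟨h, _⟩
                · exact h
                · nlinarith [norm_nonneg (σ ω)]
              rw [hv]
              calc ‖σ (ω ^ (n+1) - 1)‖ ≤ ‖σ (ω^(n+1))‖ + ‖σ 1‖ := by
                    rw [map_sub]; exact norm_sub_le _ _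
                _ = 1 + 1 := by rw [map_pow, norm_pow, hσω, one_pow, map_one, norm_one]
                _ ≤ 2 := by norm_num
          _ = 2 ^ D := by rw [Finset.prod_const, Finset.card_univ, hcard]
      rw [h1] at h2
      exact_mod_cast h2
    -- final inequality
    have hfin : ((n:ℚ) + 1) ^ D ≤ 4 ^ D := by
      have hpos : (0:ℚ) ≤ ((n:ℚ) + 1) ^ D := by positivity
      calc ((n:ℚ) + 1) ^ D = ((n:ℚ) + 1) ^ D * 1 := by ring
        _ ≤ ((n:ℚ) + 1) ^ D * |Algebra.norm ℚ u| := by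
            exact mul_le_mul_of_nonneg_left hNu1 hpos
        _ = |((n:ℚ) + 1) ^ D * Algebra.norm ℚ u| := by
            rw [abs_mul, abs_of_nonneg hpos]
        _ = |2 ^ D * Algebra.norm ℚ v| := by rw [hNeq]
        _ = 2 ^ D * |Algebra.norm ℚ v| := by
            rw [abs_mul, abs_of_nonneg (by positivity : (0:ℚ) ≤ 2 ^ D)]
        _ ≤ 2 ^ D * 2 ^ D := by
            exact mul_le_mul_of_nonneg_left hNv (by positivity)
        _ = 4 ^ D := by rw [← mul_pow]; norm_num
    have hle : ((n:ℚ) + 1) ≤ 4 :=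
      le_of_pow_le_pow_left₀ hDpos.ne' (by norm_num) hfin
    have : (n:ℚ) ≤ 3 := by linarith
    have : n ≤ 3 := by exact_mod_cast this
    omega

set_option maxHeartbeats 1000000

/-- If `n ≥ 2` is an integer and `α ∈ (0, π/2)` satisfies `n·tan α = tan(nα)`,
then `β = e^{iα}` is algebraic over `ℚ` and is not a root of unity. -/
theorem stmt_12 (n : ℕ) (hn : 2 ≤ n) (α : ℝ) (hα : α ∈ Set.Ioo 0 (Real.pi / 2))
    (hcos : Real.cos (n * α) ≠ 0) (heq : (n : ℝ) * Real.tan α = Real.tan (n * α)) :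
    IsAlgebraic ℚ (Complex.exp (Complex.I * α)) ∧
    ¬ ∃ m : ℕ, 0 < m ∧ (Complex.exp (Complex.I * α)) ^ m = 1 := by
  obtain ⟨hα0, hα2⟩ := hα
  have hcosα : Real.cos α ≠ 0 := (Real.cos_pos_of_mem_Ioo ⟨by linarith [Real.pi_pos], hα2⟩).ne'
  rw [Real.tan_eq_sin_div_cos, Real.tan_eq_sin_div_cos] at heq
  have heq2 : (n : ℝ) * Real.sin α * Real.cos (n*α) = Real.sin (n*α) * Real.cos α := by
    field_simp at heq; linarith [heq]
  have heqc : (n : ℂ) * Complex.sin α * Complex.cos (n*α) = Complex.sin (n*α) * Complex.cos α := by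
    have := congrArg (Complex.ofReal) heq2
    push_cast at this
    simpa using this
  set z := Complex.exp (Complex.I * α) with hz
  have hz0 : z ≠ 0 := Complex.exp_ne_zero _
  have hzinv : Complex.exp (-(Complex.I * α)) = z⁻¹ := by rw [Complex.exp_neg]
  have hsin : Complex.sin α = (z⁻¹ - z) * Complex.I / 2 := by
    rw [Complex.sin, ← hzinv, hz]; ring_nf
  have hcos1 : Complex.cos α = (z + z⁻¹) / 2 := by
    rw [Complex.cos, ← hzinv, hz]; ring_nf
  have hzn : Complex.exp (Complex.I * (n*α)) = z^n := by
    rw [hz, ← Complex.exp_nat_mul]; ring_nf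
  have hsinn : Complex.sin (n*α) = ((z^n)⁻¹ - z^n) * Complex.I / 2 := by
    rw [Complex.sin, ← hzn, ← Complex.exp_neg]; ring_nf
  have hcosn : Complex.cos (n*α) = (z^n + (z^n)⁻¹) / 2 := by
    rw [Complex.cos, ← hzn, ← Complex.exp_neg]; ring_nf
  rw [hsin, hcos1, hsinn, hcosn] at heqc
  have hzn0 : z^n ≠ 0 := pow_ne_zero _ hz0
  field_simp at heqc
  have hmul : (4*Complex.I*z^(n+1)) *
      ((n:ℂ) * (z^2 - 1) * ((z^2)^n + 1) - ((z^2)^n - 1) * (z^2 + 1)) = 0 := by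
    linear_combination (-(4*Complex.I*z^(n+1))) * heqc
  have h4 : (4*Complex.I*z^(n+1) : ℂ) ≠ 0 :=
    mul_ne_zero (mul_ne_zero (by norm_num) Complex.I_ne_zero) (pow_ne_zero _ hz0)
  have key : (n:ℂ) * (z^2 - 1) * ((z^2)^n + 1) = ((z^2)^n - 1) * (z^2 + 1) := by
    have := (mul_eq_zero.mp hmul).resolve_left h4
    linear_combination this
  -- properties of w = z^2
  have hwim : (z^2).im > 0 := by
    have h1 : z^2 = Complex.exp ((2*α : ℝ) * Complex.I) := by
      rw [hz, ← Complex.exp_nat_mul]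
      congr 1
      push_cast
      ring
    rw [h1, Complex.exp_im]
    have hre : ((2*α : ℝ) * Complex.I).re = 0 := by simp
    have him : ((2*α : ℝ) * Complex.I).im = 2*α := by simp
    rw [hre, him, Real.exp_zero, one_mul]
    exact Real.sin_pos_of_pos_of_lt_pi (by linarith) (by linarith [Real.pi_pos])
  have hw1 : z^2 ≠ 1 := fun h => by simp [h] at hwim
  have hwn1 : z^2 ≠ -1 := fun h => by
    rw [h] at hwim
    simp at hwim
  constructor
  · -- algebraic
    refine ⟨C (n:ℚ) * (X^2 - 1) * (X^(2*n) + 1) - (X^(2*n) - 1) * (X^2 + 1), ?_, ?_⟩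
    · intro h
      have := congrArg (Polynomial.eval (0:ℚ)) h
      simp at this
      rw [zero_pow (by omega : 2*n ≠ 0)] at this
      have hn' : (1:ℚ) < (n:ℚ) := by exact_mod_cast hn
      nlinarith [this]
    · have hpow : z^(2*n) = (z^2)^n := by rw [pow_mul]
      simp only [map_sub, map_mul, map_add, map_pow, aeval_X, aeval_C, map_one,
        Polynomial.aeval_natCast]
      push_cast
      rw [hpow]
      linear_combination key
  · rintro ⟨m, hm, hpow⟩
    have hwm : (z^2)^m = 1 := by rw [← pow_mul, mul_comm, pow_mul, hpow, one_pow]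
    exact aux n hn (z^2) m hm hwm hw1 hwn1 key
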